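/- Let (X,μ) be a measure space, p ≥ 2, p' = p/(p-1), and let f, g be nonzero elements of L^p(X,μ). Then 1 − ‖(D_p(f) + D_p(g))/2‖_{p'} ≤ ‖(D_p(f) − D_p(g))/2‖_{p'} · ‖f − g‖_p/(‖f‖_p + ‖g‖_p), where D_p(h) = ‖h‖_p^{1-p}|h|^{p-2}h. -/

import Mathlib

open MeasureTheory Filter
open scoped ENNReal NNReal

noncomputable def Lnorm {X : Type*} [MeasurableSpace X] (μ : Measure X) (p : ℝ) (f : X → ℝ) : ℝ :=
  (∫ x, |f x| ^ p ∂μ) ^ (1 / p)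

/-- The duality map `D_p(h) = ‖h‖_p^{1-p} |h|^{p-2} h`. -/
noncomputable def dualMap {X : Type*} [MeasurableSpace X] (μ : Measure X) (p : ℝ)
    (h : X → ℝ) : X → ℝ :=
  fun x => Lnorm μ p h ^ (1 - p) * (|h x| ^ (p - 2) * h x)

section Aux

variable {X : Type*} [MeasurableSpace X] {μ : Measure X} {p p' : ℝ}

lemma lnorm_nonneg (μ : Measure X) (p : ℝ) (f : X → ℝ) : 0 ≤ Lnorm μ p f :=
  Real.rpow_nonneg (integral_nonneg fun x => Real.rpow_nonneg (abs_nonneg _) _) _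

lemma lnorm_rpow (hp : p ≠ 0) (f : X → ℝ) : Lnorm μ p f ^ p = ∫ x, |f x| ^ p ∂μ := by
  rw [Lnorm, ← Real.rpow_mul (integral_nonneg fun x => Real.rpow_nonneg (abs_nonneg _) _),
    one_div, inv_mul_cancel₀ hp, Real.rpow_one]

lemma pt_sq (hp : 2 ≤ p) (t : ℝ) : |t| ^ (p - 2) * t * t = |t| ^ p := by
  rcases eq_or_ne t 0 with rfl | ht
  · simp [Real.zero_rpow (by positivity : p ≠ 0)]
  · have h2 : |t| ^ (2 : ℝ) = t * t := by
      rw [show (2 : ℝ) = ((2 : ℕ) : ℝ) by norm_num, Real.rpow_natCast, sq_abs, sq]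
    rw [mul_assoc, ← h2, ← Real.rpow_add (abs_pos.mpr ht), sub_add_cancel]

lemma pt_abs (hp : 2 ≤ p) (t : ℝ) : |(|t| ^ (p - 2) * t)| = |t| ^ (p - 1) := by
  rcases eq_or_ne t 0 with rfl | ht
  · simp [Real.zero_rpow (by intro h; nlinarith : p - 1 ≠ 0)]
  · rw [abs_mul, abs_of_nonneg (Real.rpow_nonneg (abs_nonneg t) _),
      ← Real.rpow_add_one (abs_ne_zero.mpr ht)]
    congr 1
    ring

lemma lnorm_eq_toReal (hp : 0 < p) {f : X → ℝ} (hf : AEStronglyMeasurable f μ) :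
    Lnorm μ p f = (eLpNorm f (ENNReal.ofReal p) μ).toReal := by
  rw [eLpNorm_eq_lintegral_rpow_enorm_toReal (by simp [hp, hp.not_ge, ENNReal.ofReal_eq_zero])
      ENNReal.ofReal_ne_top, ENNReal.toReal_ofReal hp.le]
  rw [Lnorm, integral_eq_lintegral_of_nonneg_ae
      (Eventually.of_forall fun x => Real.rpow_nonneg (abs_nonneg _) _)
      ((hf.norm.aemeasurable.pow_const p).aestronglyMeasurable.congr
        (Eventually.of_forall fun x => by simp [Real.norm_eq_abs]))]
  rw [← ENNReal.toReal_rpow]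
  congr 2
  refine lintegral_congr fun x => ?_
  rw [← Real.norm_eq_abs, ← ofReal_norm,
    ← ENNReal.ofReal_rpow_of_nonneg (norm_nonneg _) hp.le]

lemma lnorm_add_le (hp : 1 ≤ p) {f g : X → ℝ} (hf : MemLp f (ENNReal.ofReal p) μ)
    (hg : MemLp g (ENNReal.ofReal p) μ) :
    Lnorm μ p (fun x => f x + g x) ≤ Lnorm μ p f + Lnorm μ p g := by
  have hp0 : (0 : ℝ) < p := by linarith
  rw [lnorm_eq_toReal (f := fun x => f x + g x) hp0 (hf.1.add hg.1),
    lnorm_eq_toReal hp0 hf.1, lnorm_eq_toReal hp0 hg.1]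
  calc (eLpNorm (fun x => f x + g x) (ENNReal.ofReal p) μ).toReal
      ≤ (eLpNorm f (ENNReal.ofReal p) μ + eLpNorm g (ENNReal.ofReal p) μ).toReal := by
        refine ENNReal.toReal_mono
          (ENNReal.add_ne_top.mpr ⟨hf.eLpNorm_ne_top, hg.eLpNorm_ne_top⟩) ?_
        exact eLpNorm_add_le hf.1 hg.1 (by simpa using ENNReal.one_le_ofReal.mpr hp)
    _ = _ := ENNReal.toReal_add hf.eLpNorm_ne_top hg.eLpNorm_ne_top

lemma mul_integrable (hpq : Real.HolderConjugate p p') {u v : X → ℝ}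
    (hu : MemLp u (ENNReal.ofReal p') μ) (hv : MemLp v (ENNReal.ofReal p) μ) :
    Integrable (fun x => u x * v x) μ := by
  have hconj : (1 : ℝ≥0∞) / 1 = 1 / ENNReal.ofReal p' + 1 / ENNReal.ofReal p := by
    simp only [one_div]
    rw [← ENNReal.ofReal_inv_of_pos hpq.symm.pos, ← ENNReal.ofReal_inv_of_pos hpq.pos,
      ← ENNReal.ofReal_add (inv_nonneg.2 hpq.symm.nonneg) (inv_nonneg.2 hpq.nonneg),
      hpq.symm.inv_add_inv_eq_one, ENNReal.ofReal_one, inv_one]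
  have h := hv.smul hu (r := 1) (hpqr := ⟨by simpa only [one_div] using hconj.symm⟩)
  rw [memLp_one_iff_integrable] at h
  exact h.congr (Eventually.of_forall fun x => by simp [smul_eq_mul])

lemma lnorm_holder (hpq : Real.HolderConjugate p p') {u v : X → ℝ}
    (hu : MemLp u (ENNReal.ofReal p') μ) (hv : MemLp v (ENNReal.ofReal p) μ) :
    ∫ x, u x * v x ∂μ ≤ Lnorm μ p' u * Lnorm μ p v := by
  have huv := mul_integrable hpq hu hv
  have h1 : ∫ x, u x * v x ∂μ ≤ ∫ x, ‖u x‖ * ‖v x‖ ∂μ := by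
    refine integral_mono huv ?_ fun x => ?_
    · have := huv.abs
      refine this.congr (Eventually.of_forall fun x => ?_)
      simp [abs_mul, Real.norm_eq_abs]
    · calc u x * v x ≤ |u x * v x| := le_abs_self _
        _ = ‖u x‖ * ‖v x‖ := by simp [abs_mul]
  refine h1.trans ?_
  have h2 := integral_mul_norm_le_Lp_mul_Lq hpq.symm hu hv
  calc ∫ x, ‖u x‖ * ‖v x‖ ∂μ
      ≤ (∫ a, ‖u a‖ ^ p' ∂μ) ^ (1 / p') * (∫ a, ‖v a‖ ^ p ∂μ) ^ (1 / p) := h2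
    _ = Lnorm μ p' u * Lnorm μ p v := by simp [Lnorm, Real.norm_eq_abs]

lemma memD (hp : 2 ≤ p) (hp' : p' = p / (p - 1)) {f : X → ℝ}
    (hf : MemLp f (ENNReal.ofReal p) μ) : MemLp (dualMap μ p f) (ENNReal.ofReal p') μ := by
  have h1 : (0:ℝ) < p - 1 := by linarith
  have hmono := hf.norm_rpow_div (ENNReal.ofReal (p - 1))
  rw [ENNReal.toReal_ofReal h1.le, ← ENNReal.ofReal_div_of_pos h1, ← hp'] at hmono
  have hmeas : AEStronglyMeasurable (fun x => |f x| ^ (p - 2) * f x) μ := by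
    refine (((hf.1.norm.aemeasurable.pow_const (p - 2)).mul
      hf.1.aemeasurable).aestronglyMeasurable).congr
      (Eventually.of_forall fun x => by simp [Real.norm_eq_abs])
  have hinner : MemLp (fun x => |f x| ^ (p - 2) * f x) (ENNReal.ofReal p') μ := by
    refine hmono.of_le hmeas (Eventually.of_forall fun x => ?_)
    rw [Real.norm_eq_abs, pt_abs hp, Real.norm_eq_abs, Real.norm_eq_abs,
      abs_of_nonneg (Real.rpow_nonneg (abs_nonneg _) _)]
  exact hinner.const_mul _

lemma dual_int (hp : 2 ≤ p) {f : X → ℝ} (hf : MemLp f (ENNReal.ofReal p) μ)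
    (hfn : 0 < Lnorm μ p f) : ∫ x, dualMap μ p f x * f x ∂μ = Lnorm μ p f := by
  have hp0 : (0:ℝ) < p := by linarith
  have hpt : ∀ x, dualMap μ p f x * f x = Lnorm μ p f ^ (1 - p) * |f x| ^ p := fun x => by
    rw [dualMap, mul_assoc, pt_sq hp]
  calc ∫ x, dualMap μ p f x * f x ∂μ = ∫ x, Lnorm μ p f ^ (1 - p) * |f x| ^ p ∂μ := by
        simp_rw [hpt]
    _ = Lnorm μ p f ^ (1 - p) * ∫ x, |f x| ^ p ∂μ := integral_const_mul _ _
    _ = Lnorm μ p f ^ (1 - p) * Lnorm μ p f ^ p := by rw [lnorm_rpow hp0.ne' f]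
    _ = Lnorm μ p f := by
        rw [← Real.rpow_add hfn, sub_add_cancel, Real.rpow_one]

end Aux

/-- Key duality estimate in the proof of Lemma `modcont`:
`1 − ‖(D_p(f) + D_p(g))/2‖_{p'} ≤ ‖(D_p(f) − D_p(g))/2‖_{p'} ‖f − g‖_p / (‖f‖_p + ‖g‖_p)`. -/
theorem stmt16 {X : Type*} [MeasurableSpace X] (μ : Measure X) (p p' : ℝ)
    (hp : 2 ≤ p) (hpp' : 1 / p + 1 / p' = 1)
    (f g : X → ℝ)
    (hf : MemLp f (ENNReal.ofReal p) μ) (hg : MemLp g (ENNReal.ofReal p) μ)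
    (hfn : 0 < Lnorm μ p f) (hgn : 0 < Lnorm μ p g) :
    1 - Lnorm μ p' (fun x => (dualMap μ p f x + dualMap μ p g x) / 2) ≤
      Lnorm μ p' (fun x => (dualMap μ p f x - dualMap μ p g x) / 2) *
        (Lnorm μ p (fun x => f x - g x) / (Lnorm μ p f + Lnorm μ p g)) := by
  have hp0 : (0:ℝ) < p := by linarith
  have hp1 : (0:ℝ) < p - 1 := by linarith
  have hne : p' ≠ 0 := by
    intro h
    rw [h, div_zero, add_zero] at hpp'
    have : p = 1 := by field_simp at hpp'; linarith
    linarith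
  have hp'val : p' = p / (p - 1) := by
    have h := hpp'
    field_simp [hp0.ne', hne] at h
    field_simp [hp1.ne']
    nlinarith [h]
  have hconj : Real.HolderConjugate p p' := by
    constructor
    · rw [inv_one, ← one_div, ← one_div, hpp']
    · linarith
    · rw [hp'val]; exact div_pos hp0 hp1
  -- MemLp facts
  have hDf := memD hp hp'val hf
  have hDg := memD hp hp'val hg
  set Df := dualMap μ p f with hDfdef
  set Dg := dualMap μ p g with hDgdef
  set S : X → ℝ := fun x => (Df x + Dg x) / 2 with hSdef
  set T : X → ℝ := fun x => (Df x - Dg x) / 2 with hTdef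
  have hS : MemLp S (ENNReal.ofReal p') μ := by
    have : S = fun x => (2⁻¹ : ℝ) * (Df x + Dg x) := by funext x; rw [hSdef]; ring
    rw [this]; exact (hDf.add hDg).const_mul _
  have hT : MemLp T (ENNReal.ofReal p') μ := by
    have : T = fun x => (2⁻¹ : ℝ) * (Df x - Dg x) := by funext x; rw [hTdef]; ring
    rw [this]; exact (hDf.sub hDg).const_mul _
  have hfg : MemLp (fun x => f x + g x) (ENNReal.ofReal p) μ := hf.add hg
  have hfg' : MemLp (fun x => f x - g x) (ENNReal.ofReal p) μ := hf.sub hg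
  set cf := Lnorm μ p f
  set cg := Lnorm μ p g
  set cS := Lnorm μ p' S
  set cT := Lnorm μ p' T
  set a := Lnorm μ p (fun x => f x - g x)
  set N := cf + cg with hNdef
  have hN : 0 < N := by positivity
  -- key identity: ∫ S (f+g) + ∫ T (f−g) = cf + cg
  have hIA : Integrable (fun x => S x * (f x + g x)) μ := mul_integrable hconj hS hfg
  have hIB : Integrable (fun x => T x * (f x - g x)) μ := mul_integrable hconj hT hfg'
  have hIDf : Integrable (fun x => Df x * f x) μ := mul_integrable hconj hDf hf
  have hIDg : Integrable (fun x => Dg x * g x) μ := mul_integrable hconj hDg hg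
  have key : (∫ x, S x * (f x + g x) ∂μ) + (∫ x, T x * (f x - g x) ∂μ) = N := by
    rw [← integral_add hIA hIB]
    have : (fun x => S x * (f x + g x) + T x * (f x - g x))
        = fun x => Df x * f x + Dg x * g x := by
      funext x; rw [hSdef, hTdef]; ring
    rw [this, integral_add hIDf hIDg, dual_int hp hf hfn, dual_int hp hg hgn]
  -- Hölder estimates
  have hA : (∫ x, S x * (f x + g x) ∂μ) ≤ cS * N := by
    refine (lnorm_holder hconj hS hfg).trans ?_
    exact mul_le_mul_of_nonneg_left (lnorm_add_le (by linarith) hf hg) (lnorm_nonneg μ p' S)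
  have hB : (∫ x, T x * (f x - g x) ∂μ) ≤ cT * a := lnorm_holder hconj hT hfg'
  -- conclude
  have hmain : (1 - cS) * N ≤ cT * a := by nlinarith [key, hA, hB]
  have ha : 0 ≤ a := lnorm_nonneg μ p _
  calc 1 - cS = (1 - cS) * N / N := by field_simp
    _ ≤ cT * a / N := by gcongr
    _ = cT * (a / N) := mul_div_assoc _ _ _
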